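/- (Lemma 2, forward direction.) Let N ≥ 1, θ_1,…,θ_N ∈ ℝ, and let α̃ : ℝ^N → ℝ be an arbitrary function of the phases. Suppose that with A = α̃(θ_1,…,θ_N) one has ∑_{j=1}^N sin(θ_1 − θ_j − A) = ∑_{j=1}^N sin(θ_i − θ_j − A) for every i = 2,…,N. Then at least one of the following holds: (a) ∑_{j=1}^N cos θ_j = 0 and ∑_{j=1}^N sin θ_j = 0; (b) there exist a, b ∈ ℝ such that every θ_i is congruent modulo 2π either to a or to b. -/

import Mathlib

open Real Finset

/-- Lemma 2 (forward direction): the same dichotomy as Lemma 1 holds when the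
phase shift is an arbitrary scalar function `α̃` of the full phase
configuration (e.g. a function of the order parameter): if all the coupling
terms `g_i(θ, α̃(θ))` coincide, then either the order parameter vanishes, or
the phases take at most two distinct values modulo `2π`. -/
theorem stmt_2 (N : ℕ) (hN : 1 ≤ N) (αf : (Fin N → ℝ) → ℝ) (θ : Fin N → ℝ)
    (heq : ∀ i : Fin N, ∑ j, Real.sin (θ ⟨0, hN⟩ - θ j - αf θ)
                      = ∑ j, Real.sin (θ i - θ j - αf θ)) :
    ((∑ j, Real.cos (θ j)) = 0 ∧ (∑ j, Real.sin (θ j)) = 0) ∨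
    (∃ a b : ℝ, ∀ i : Fin N,
       (∃ k : ℤ, θ i - a = 2 * π * k) ∨ (∃ k : ℤ, θ i - b = 2 * π * k)) := by
  set A := αf θ with hA
  set C' := ∑ j, Real.cos (θ j + A) with hC'
  set S' := ∑ j, Real.sin (θ j + A) with hS'
  have key : ∀ i : Fin N, Real.sin (θ i) * C' - Real.cos (θ i) * S'
      = Real.sin (θ ⟨0, hN⟩) * C' - Real.cos (θ ⟨0, hN⟩) * S' := by
    intro i
    have h := heq i
    have expand : ∀ x : ℝ, ∑ j, Real.sin (x - θ j - A)
        = Real.sin x * C' - Real.cos x * S' := by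
      intro x
      rw [hC', hS', Finset.mul_sum, Finset.mul_sum, ← Finset.sum_sub_distrib]
      refine Finset.sum_congr rfl fun j _ => ?_
      rw [show x - θ j - A = x - (θ j + A) by ring, Real.sin_sub]
    rw [expand, expand] at h
    exact h.symm
  by_cases hz : C' = 0 ∧ S' = 0
  · left
    obtain ⟨h1, h2⟩ := hz
    have e1 : C' = Real.cos A * ∑ j, Real.cos (θ j) - Real.sin A * ∑ j, Real.sin (θ j) := by
      rw [hC', Finset.mul_sum, Finset.mul_sum, ← Finset.sum_sub_distrib]
      refine Finset.sum_congr rfl fun j _ => ?_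
      rw [Real.cos_add]; ring
    have e2 : S' = Real.sin A * ∑ j, Real.cos (θ j) + Real.cos A * ∑ j, Real.sin (θ j) := by
      rw [hS', Finset.mul_sum, Finset.mul_sum, ← Finset.sum_add_distrib]
      refine Finset.sum_congr rfl fun j _ => ?_
      rw [Real.sin_add]; ring
    rw [e1] at h1; rw [e2] at h2
    have hsq : Real.cos A ^ 2 + Real.sin A ^ 2 = 1 := by
      rw [add_comm]; exact Real.sin_sq_add_cos_sq A
    constructor
    · linear_combination Real.cos A * h1 + Real.sin A * h2 - (∑ j, Real.cos (θ j)) * hsq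
    · linear_combination Real.cos A * h2 - Real.sin A * h1 - (∑ j, Real.sin (θ j)) * hsq
  · right
    -- (C', S') ≠ 0 : write as amplitude-phase
    have hzne : (⟨C', S'⟩ : ℂ) ≠ 0 := by
      intro h
      apply hz
      constructor
      · have := congrArg Complex.re h; simpa using this
      · have := congrArg Complex.im h; simpa using this
    set z : ℂ := ⟨C', S'⟩ with hzdef
    set r := ‖z‖ with hr
    have hrpos : 0 < r := norm_pos_iff.mpr hzne
    set φ := Complex.arg z with hφ
    have hcos : r * Real.cos φ = C' := Complex.norm_mul_cos_arg z
    have hsin : r * Real.sin φ = S' := Complex.norm_mul_sin_arg z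
    have key2 : ∀ i : Fin N, Real.sin (θ i - φ) = Real.sin (θ ⟨0, hN⟩ - φ) := by
      intro i
      have h := key i
      rw [← hcos, ← hsin] at h
      have h' : r * Real.sin (θ i - φ) = r * Real.sin (θ ⟨0, hN⟩ - φ) := by
        rw [Real.sin_sub, Real.sin_sub]; ring_nf; ring_nf at h; linarith
      exact mul_left_cancel₀ (ne_of_gt hrpos) h'
    refine ⟨θ ⟨0, hN⟩, π - θ ⟨0, hN⟩ + 2 * φ, fun i => ?_⟩
    have h := key2 i
    rw [Real.sin_eq_sin_iff] at h
    obtain ⟨k, hk | hk⟩ := h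
    · left; exact ⟨-k, by push_cast; linarith [hk]⟩
    · right; exact ⟨k, by linarith [hk]⟩
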